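/- Let f be a Boolean network on n nodes with h outputs whose dependency graph is G (marked at the output indices {1,…,h}). Then f is structurally observable if and only if the vertex set of G can be partitioned into vertex-disjoint observed paths. -/

import Mathlib

/-- `u` is the unique in-neighbor of `w` in the digraph with edge relation `E`. -/
def UniqueInNbr {V : Type*} (E : V → V → Prop) (u w : V) : Prop :=
  E u w ∧ ∀ u', E u' w → u' = u

/-- Property P1: every simple (non-marked) vertex `v` has some vertex `v'`
whose unique in-neighbor is `v`. -/
def SatisfiesP1 {V : Type*} (E : V → V → Prop) (O : Set V) : Prop :=
  ∀ v, v ∉ O → ∃ v', UniqueInNbr E v v'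

/-- A directed (simple) cycle of length `m + 1`, given by an injective cyclic
sequence of vertices with consecutive edges (indices mod `m + 1`). -/
def IsCycle {V : Type*} (E : V → V → Prop) {m : ℕ} (c : Fin (m + 1) → V) : Prop :=
  Function.Injective c ∧ ∀ j, E (c j) (c (j + 1))

/-- A cycle `c` satisfies Property P2 if some vertex `v` off the cycle has a
vertex of the cycle as its unique in-neighbor. -/
def CycleSatisfiesP2 {V : Type*} (E : V → V → Prop) {m : ℕ} (c : Fin (m + 1) → V) : Prop :=
  ∃ v, (∀ j, c j ≠ v) ∧ ∃ j, UniqueInNbr E (c j) v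

/-- Property P2: every directed cycle consisting entirely of simple vertices
satisfies Property P2. -/
def SatisfiesP2 {V : Type*} (E : V → V → Prop) (O : Set V) : Prop :=
  ∀ (m : ℕ) (c : Fin (m + 1) → V), IsCycle E c → (∀ j, c j ∉ O) → CycleSatisfiesP2 E c

/-- An observed path: an injective directed path whose terminal vertex is the
unique marked vertex on the path, and each vertex is the unique in-neighbor of
its successor on the path. -/
def IsObservedPath {V : Type*} (E : V → V → Prop) (O : Set V) {s : ℕ}
    (p : Fin (s + 1) → V) : Prop :=
  Function.Injective p ∧
  (∀ k : Fin s, UniqueInNbr E (p k.castSucc) (p k.succ)) ∧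
  p (Fin.last s) ∈ O ∧
  (∀ k, p k ∈ O → k = Fin.last s)

/-- The vertex set can be partitioned into vertex-disjoint observed paths. -/
def ObservedPathPartition {V : Type*} (E : V → V → Prop) (O : Set V) : Prop :=
  ∃ (r : ℕ) (ℓ : Fin r → ℕ) (p : (i : Fin r) → Fin (ℓ i + 1) → V),
    (∀ i, IsObservedPath E O (p i)) ∧
    (Pairwise fun i j => Disjoint (Set.range (p i)) (Set.range (p j))) ∧
    (⋃ i, Set.range (p i)) = Set.univ

/-- Coordinate `i` is essential for the update function `g`. -/
def Essential {n : ℕ} {α : Type*} (g : (Fin n → α) → α) (i : Fin n) : Prop :=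
  ∃ x y : Fin n → α, (∀ k, k ≠ i → x k = y k) ∧ g x ≠ g y

/-- Edge relation of the dependency (interaction) graph of the network `f`:
there is an edge `(i, j)` iff coordinate `i` is essential for `f j`. -/
def DepEdge {n : ℕ} {α : Type*} (f : Fin n → (Fin n → α) → α) (i j : Fin n) : Prop :=
  Essential (f j) i

/-- One synchronous step of the network. -/
def netStep {n : ℕ} {α : Type*} (f : Fin n → (Fin n → α) → α) (x : Fin n → α) :
    Fin n → α :=
  fun i => f i x

/-- Observability: any two distinct initial states produce output sequences
(the values at the first `h` coordinates) that differ at some time instant. -/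
def Observable {n : ℕ} {α : Type*} (f : Fin n → (Fin n → α) → α) (h : ℕ) : Prop :=
  ∀ x y : Fin n → α, x ≠ y →
    ∃ (k : ℕ) (q : Fin n), (q : ℕ) < h ∧ (netStep f)^[k] x q ≠ (netStep f)^[k] y q

/-- Structural observability of a Boolean network: every Boolean network with
the same dependency graph (and same output index set) is observable. -/
def StructurallyObservable {n : ℕ} (f : Fin n → (Fin n → Bool) → Bool) (h : ℕ) : Prop :=
  ∀ g : Fin n → (Fin n → Bool) → Bool,
    (∀ i j, DepEdge g i j ↔ DepEdge f i j) → Observable g h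

section Aux
open Classical
attribute [local instance] Classical.propDecidable

/-- If two states agree on all essential coordinates, the value is equal. -/
lemma essential_agree {n : ℕ} {g : (Fin n → Bool) → Bool} :
    ∀ (s : Finset (Fin n)) (x y : Fin n → Bool),
      (∀ i, x i ≠ y i → i ∈ s ∧ ¬ Essential g i) → g x = g y := by
  intro s
  induction s using Finset.strongInduction with
  | _ s ih =>
    intro x y hxy
    by_cases hxyeq : x = y
    · rw [hxyeq]
    · obtain ⟨i, hi⟩ := Function.ne_iff.mp hxyeq
      obtain ⟨his, hie⟩ := hxy i hi
      set x' := Function.update x i (y i) with hx'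
      have h1 : g x = g x' := by
        by_contra hne
        exact hie ⟨x, x', fun k hk => (Function.update_of_ne hk _ _).symm, hne⟩
      rw [h1]
      refine ih (s.erase i) (Finset.erase_ssubset his) x' y ?_
      intro j hj
      have hji : j ≠ i := by
        intro hji; subst hji
        exact hj (Function.update_self _ _ _)
      simp only [hx', Function.update_of_ne hji] at hj
      exact ⟨Finset.mem_erase.mpr ⟨hji, (hxy j hj).1⟩, (hxy j hj).2⟩

lemma essential_agree' {n : ℕ} {g : (Fin n → Bool) → Bool} {x y : Fin n → Bool}
    (h : ∀ i, Essential g i → x i = y i) : g x = g y := by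
  refine essential_agree Finset.univ x y fun i hi => ⟨Finset.mem_univ i, fun he => hi (h i he)⟩


/-- Propagation of a difference along a unique in-neighbor edge. -/
lemma step_ne {n : ℕ} {g : Fin n → (Fin n → Bool) → Bool} {v w : Fin n}
    (hu : UniqueInNbr (DepEdge g) v w) {x y : Fin n → Bool}
    (hxy : x v ≠ y v) : g w x ≠ g w y := by
  have key : ∀ z : Fin n → Bool, g w z = g w (fun _ => z v) := by
    intro z
    refine essential_agree' fun i hi => ?_
    have : i = v := hu.2 i hi
    rw [this]
  have hinj : g w (fun _ => true) ≠ g w (fun _ => false) := by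
    obtain ⟨a, b, hab, hne⟩ := hu.1
    have hav : a v ≠ b v := by
      intro hav
      apply hne
      have : a = b := funext fun k => by
        by_cases hk : k = v
        · rw [hk]; exact hav
        · exact hab k hk
      rw [this]
    rw [key a, key b] at hne
    cases hva : a v <;> cases hvb : b v <;> simp [hva, hvb] at hav hne ⊢
    · exact fun hc => hne hc.symm
    · exact hne
  rw [key x, key y]
  cases hvx : x v <;> cases hvy : y v <;> simp [hvx, hvy] at hxy ⊢
  · exact fun hc => hinj hc.symm
  · exact hinj


lemma SO_of_partition {n h : ℕ} (f : Fin n → (Fin n → Bool) → Bool)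
    (hpart : ObservedPathPartition (DepEdge f) {i : Fin n | (i : ℕ) < h}) :
    StructurallyObservable f h := by
  obtain ⟨r, ℓ, p, hpath, hdisj, huniv⟩ := hpart
  intro g hg x y hxy
  have key : ∀ (t : ℕ) (i : Fin r) (k : Fin (ℓ i + 1)), (k : ℕ) + t = ℓ i →
      ∀ x y : Fin n → Bool, x (p i k) ≠ y (p i k) →
      ∃ (k' : ℕ) (q : Fin n), (q : ℕ) < h ∧ (netStep g)^[k'] x q ≠ (netStep g)^[k'] y q := by
    intro t
    induction t with
    | zero =>
      intro i k hk x y hne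
      have hk' : k = Fin.last (ℓ i) := by
        apply Fin.ext; simpa using hk
      refine ⟨0, p i k, ?_, hne⟩
      have := (hpath i).2.2.1
      rw [hk']
      exact this
    | succ t ih =>
      intro i k hk x y hne
      have hklt : (k : ℕ) < ℓ i := by omega
      set k₀ : Fin (ℓ i) := ⟨(k : ℕ), hklt⟩ with hk₀
      have hkc : k = k₀.castSucc := by apply Fin.ext; simp [hk₀]
      have hu : UniqueInNbr (DepEdge f) (p i k₀.castSucc) (p i k₀.succ) :=
        (hpath i).2.1 k₀
      have hu' : UniqueInNbr (DepEdge g) (p i k₀.castSucc) (p i k₀.succ) :=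
        ⟨(hg _ _).mpr hu.1, fun u' h' => hu.2 u' ((hg _ _).mp h')⟩
      rw [hkc] at hne
      have hstep : (netStep g x) (p i k₀.succ) ≠ (netStep g y) (p i k₀.succ) :=
        step_ne hu' hne
      have hsv : ((k₀.succ : Fin (ℓ i + 1)) : ℕ) + t = ℓ i := by simp [hk₀]; omega
      obtain ⟨k', q, hq, hne'⟩ := ih i k₀.succ hsv (netStep g x) (netStep g y) hstep
      exact ⟨k' + 1, q, hq, by
        rwa [Function.iterate_succ_apply, Function.iterate_succ_apply]⟩
  obtain ⟨v, hv⟩ := Function.ne_iff.mp hxy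
  have hvmem : v ∈ ⋃ i, Set.range (p i) := by rw [huniv]; trivial
  obtain ⟨_, ⟨i, rfl⟩, k, rfl⟩ := hvmem
  exact key (ℓ i - (k : ℕ)) i k (by have := k.isLt; omega) x y hv


/-- `g` reads only the coordinates in `S`. -/
def ReadsOnly {n : ℕ} (S : Finset (Fin n)) (g : (Fin n → Bool) → Bool) : Prop :=
  ∀ x y : Fin n → Bool, (∀ i ∈ S, x i = y i) → g x = g y

lemma not_essential_of_readsOnly {n : ℕ} {S : Finset (Fin n)} {g : (Fin n → Bool) → Bool}
    (hro : ReadsOnly S g) {i : Fin n} (hi : i ∉ S) : ¬ Essential g i := by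
  rintro ⟨x, y, hxy, hne⟩
  exact hne (hro x y fun j hj => hxy j (fun hji => hi (hji ▸ hj)))

noncomputable def andSet {n : ℕ} (S : Finset (Fin n)) (x : Fin n → Bool) : Bool :=
  if ∀ i ∈ S, x i = true then true else false

lemma andSet_eq_true {n : ℕ} {S : Finset (Fin n)} {x : Fin n → Bool} :
    andSet S x = true ↔ ∀ i ∈ S, x i = true := by
  unfold andSet; split <;> simp_all

lemma andSet_eq_false {n : ℕ} {S : Finset (Fin n)} {x : Fin n → Bool} {i : Fin n}
    (hi : i ∈ S) (hxi : x i = false) : andSet S x = false := by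
  unfold andSet; split
  · next hc => rw [hc i hi] at hxi; exact absurd hxi (by simp)
  · rfl

lemma readsOnly_andSet {n : ℕ} (S : Finset (Fin n)) : ReadsOnly S (andSet S) := by
  intro x y hxy
  unfold andSet
  have : (∀ i ∈ S, x i = true) ↔ (∀ i ∈ S, y i = true) := by
    constructor <;> intro hc i hi
    · rw [← hxy i hi]; exact hc i hi
    · rw [hxy i hi]; exact hc i hi
  split <;> split <;> simp_all

lemma essential_andSet {n : ℕ} {S : Finset (Fin n)} {i : Fin n} (hi : i ∈ S) :
    Essential (andSet S) i := by
  refine ⟨fun _ => true, Function.update (fun _ => true) i false,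
    fun k hk => (Function.update_of_ne hk false fun _ => true).symm, ?_⟩
  rw [andSet_eq_true.mpr (fun _ _ => rfl),
    andSet_eq_false hi (Function.update_self _ _ _)]
  simp

/-- The finset of essential coordinates. -/
noncomputable def EssSet {n : ℕ} (g : (Fin n → Bool) → Bool) : Finset (Fin n) :=
  Finset.univ.filter fun i => Essential g i

lemma mem_EssSet {n : ℕ} {g : (Fin n → Bool) → Bool} {i : Fin n} :
    i ∈ EssSet g ↔ Essential g i := by simp [EssSet]

lemma readsOnly_EssSet {n : ℕ} (g : (Fin n → Bool) → Bool) : ReadsOnly (EssSet g) g := by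
  intro x y hxy
  exact essential_agree' fun i hi => hxy i (mem_EssSet.mpr hi)


lemma not_SO_of_not_P1 {n h : ℕ} (f : Fin n → (Fin n → Bool) → Bool)
    (hP1 : ¬ SatisfiesP1 (DepEdge f) {i : Fin n | (i : ℕ) < h}) :
    ¬ StructurallyObservable f h := by
  simp only [SatisfiesP1, not_forall] at hP1
  obtain ⟨v, hvO, hv⟩ := hP1
  push_neg at hv
  -- the counterexample network
  set g : Fin n → (Fin n → Bool) → Bool := fun j =>
    if hc : (EssSet (f j)).card = 1 then
      (fun z => z (Finset.card_eq_one.mp hc).choose)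
    else andSet (EssSet (f j)) with hgdef
  -- essential sets of g coincide with those of f
  have hEss : ∀ j i, Essential (g j) i ↔ Essential (f j) i := by
    intro j i
    rw [← mem_EssSet (g := f j)]
    by_cases hc : (EssSet (f j)).card = 1
    · obtain hu := (Finset.card_eq_one.mp hc).choose_spec
      set u := (Finset.card_eq_one.mp hc).choose
      have hgj : g j = fun z => z u := by rw [hgdef]; simp [hc]; rfl
      rw [hgj, hu, Finset.mem_singleton]
      constructor
      · intro he
        by_contra hne
        exact not_essential_of_readsOnly (S := {u})
          (fun x y hxy => hxy u (Finset.mem_singleton_self u))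
          (by simpa using hne) he
      · rintro rfl
        refine ⟨fun _ => false, Function.update (fun _ => false) u true,
          fun k hk => (Function.update_of_ne hk true fun _ => false).symm, ?_⟩
        simp [Function.update_self]
    · have hgj : g j = andSet (EssSet (f j)) := by rw [hgdef]; simp [hc]
      rw [hgj]
      constructor
      · intro he
        by_contra hne
        exact not_essential_of_readsOnly (readsOnly_andSet _) hne he
      · exact essential_andSet
  intro hSO
  have hobs := hSO g (fun i j => by rw [DepEdge, DepEdge, hEss])
  -- the two indistinguishable states
  set x0 : Fin n → Bool := fun _ => false with hx0
  set y0 : Fin n → Bool := Function.update x0 v true with hy0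
  have hxyne : x0 ≠ y0 := by
    intro hcon
    have := congrFun hcon v
    rw [hy0, Function.update_self] at this
    simp [hx0] at this
  -- one step makes them equal
  have hstep : netStep g x0 = netStep g y0 := by
    funext j
    show g j x0 = g j y0
    by_cases hc : (EssSet (f j)).card = 1
    · obtain hu := (Finset.card_eq_one.mp hc).choose_spec
      set u := (Finset.card_eq_one.mp hc).choose
      have hgj : g j = fun z => z u := by rw [hgdef]; simp [hc]; rfl
      have huv : u ≠ v := by
        rintro rfl
        refine hv j ⟨?_, ?_⟩
        · exact mem_EssSet.mp (by rw [hu]; exact Finset.mem_singleton_self u)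
        · intro u' hu'
          have : u' ∈ EssSet (f j) := mem_EssSet.mpr hu'
          rw [hu] at this
          exact Finset.mem_singleton.mp this
      rw [hgj]
      simp only [hy0]
      rw [Function.update_of_ne huv]
    · have hgj : g j = andSet (EssSet (f j)) := by rw [hgdef]; simp [hc]
      rw [hgj]
      rcases Finset.eq_empty_or_nonempty (EssSet (f j)) with he | he
      · exact readsOnly_andSet _ x0 y0 (by rw [he]; simp)
      · -- card ≥ 2, find an element ≠ v
        have h2 : 2 ≤ (EssSet (f j)).card := by
          have := Finset.Nonempty.card_pos he
          omega
        obtain ⟨a, ha, b, hb, hab⟩ := Finset.one_lt_card.mp h2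
        obtain ⟨w, hw, hwv⟩ : ∃ w ∈ EssSet (f j), w ≠ v := by
          by_cases hav : a = v
          · exact ⟨b, hb, fun hbv => hab (by rw [hav, hbv])⟩
          · exact ⟨a, ha, hav⟩
        rw [andSet_eq_false hw rfl, andSet_eq_false hw (by
          rw [hy0, Function.update_of_ne hwv])]
  -- derive the contradiction with observability
  obtain ⟨k, q, hq, hne⟩ := hobs x0 y0 hxyne
  apply hne
  cases k with
  | zero =>
    simp only [Function.iterate_zero, id]
    rw [hy0, Function.update_of_ne (by
      intro hqv
      apply hvO
      rw [← hqv]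
      exact hq)]
  | succ k =>
    rw [Function.iterate_succ_apply, Function.iterate_succ_apply, hstep]
lemma essential_proj {n : ℕ} {u i : Fin n} : Essential (fun z : Fin n → Bool => z u) i ↔ i = u := by
  constructor
  · intro he
    by_contra hne
    exact not_essential_of_readsOnly (S := {u})
      (fun x y hxy => hxy u (Finset.mem_singleton_self u)) (by simpa using hne) he
  · rintro rfl
    refine ⟨fun _ => false, Function.update (fun _ => false) i true,
      fun k hk => (Function.update_of_ne hk true fun _ => false).symm, ?_⟩
    simp [Function.update_self]

lemma exists_ne_of_two_le {n : ℕ} {C : Finset (Fin n)} (h2 : 2 ≤ C.card) (a : Fin n) :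
    ∃ i ∈ C, i ≠ a := by
  obtain ⟨x, hx, y, hy, hxy⟩ := Finset.one_lt_card.mp h2
  by_cases hxa : x = a
  · exact ⟨y, hy, fun hya => hxy (by rw [hxa, hya])⟩
  · exact ⟨x, hx, hxa⟩


/-- The gadget function used in the counterexample constructions. -/
noncomputable def gad {n : ℕ} (ob : Option (Fin n)) (C : Finset (Fin n)) :
    (Fin n → Bool) → Bool :=
  match ob with
  | some b =>
    if C = ∅ then fun z => z b
    else if hC1 : C.card = 1 then
      fun z => z b && !(z (Finset.card_eq_one.mp hC1).choose)
    else fun z => xor (z b) (andSet C z)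
  | none =>
    if C = ∅ then fun _ => false
    else if hC1 : C.card = 1 then fun z => z (Finset.card_eq_one.mp hC1).choose
    else andSet C

lemma gad_zero {n : ℕ} (ob : Option (Fin n)) (C : Finset (Fin n)) :
    gad ob C (fun _ => false) = false := by
  have hand : C ≠ ∅ → andSet C (fun _ => false) = false := by
    intro hC
    obtain ⟨a, ha⟩ := Finset.nonempty_iff_ne_empty.mpr hC
    exact andSet_eq_false ha rfl
  match ob with
  | some b =>
    simp only [gad]
    by_cases hC : C = ∅
    · rw [if_pos hC]
    · rw [if_neg hC]
      by_cases hC1 : C.card = 1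
      · rw [dif_pos hC1]; rfl
      · rw [dif_neg hC1]
        simp [hand hC]
  | none =>
    simp only [gad]
    by_cases hC : C = ∅
    · rw [if_pos hC]
    · rw [if_neg hC]
      by_cases hC1 : C.card = 1
      · rw [dif_pos hC1]
      · rw [dif_neg hC1]
        exact hand hC

lemma card_two_le {n : ℕ} {C : Finset (Fin n)} (hC : C ≠ ∅) (hC1 : ¬ C.card = 1) :
    2 ≤ C.card := by
  have := Finset.nonempty_iff_ne_empty.mpr hC
  have := Finset.Nonempty.card_pos this
  omega

lemma gad_delta_some {n : ℕ} {b : Fin n} {C : Finset (Fin n)} (hb : b ∉ C)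
    {z : Fin n → Bool} {a : Fin n} (hz : ∀ i, z i = true ↔ i = a) :
    gad (some b) C z = z b := by
  simp only [gad]
  by_cases hC : C = ∅
  · rw [if_pos hC]
  · rw [if_neg hC]
    by_cases hC1 : C.card = 1
    · rw [dif_pos hC1]
      obtain hu := (Finset.card_eq_one.mp hC1).choose_spec
      set u := (Finset.card_eq_one.mp hC1).choose
      by_cases hua : u = a
      · have hzb : z b = false := by
          rw [← Bool.not_eq_true, hz b]
          intro hba
          exact hb (by rw [hba, ← hua, hu]; exact Finset.mem_singleton_self u)
        rw [hzb]; simp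
      · have hzu : z u = false := by
          rw [← Bool.not_eq_true, hz u]; exact hua
        rw [hzu]; simp
    · rw [dif_neg hC1]
      obtain ⟨i, hiC, hia⟩ := exists_ne_of_two_le (card_two_le hC hC1) a
      have : z i = false := by rw [← Bool.not_eq_true, hz i]; exact hia
      rw [andSet_eq_false hiC this]
      simp

lemma gad_delta_none {n : ℕ} {C : Finset (Fin n)}
    {z : Fin n → Bool} {a : Fin n} (hz : ∀ i, z i = true ↔ i = a)
    (hC1 : ∀ hC1 : C.card = 1, (Finset.card_eq_one.mp hC1).choose ≠ a) :
    gad none C z = false := by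
  simp only [gad]
  by_cases hC : C = ∅
  · rw [if_pos hC]
  · rw [if_neg hC]
    by_cases hc1 : C.card = 1
    · rw [dif_pos hc1]
      rw [← Bool.not_eq_true, hz]
      exact hC1 hc1
    · rw [dif_neg hc1]
      obtain ⟨i, hiC, hia⟩ := exists_ne_of_two_le (card_two_le hC hc1) a
      exact andSet_eq_false hiC (by rw [← Bool.not_eq_true, hz i]; exact hia)

lemma mem_of_eq_singleton {n : ℕ} {s : Finset (Fin n)} {u a : Fin n} (h : s = {u}) :
    a ∈ s ↔ a = u := by rw [h, Finset.mem_singleton]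

lemma gad_ess_none {n : ℕ} {C : Finset (Fin n)} {i : Fin n} :
    Essential (gad none C) i ↔ i ∈ C := by
  simp only [gad]
  by_cases hC : C = ∅
  · rw [if_pos hC, hC]
    simp only [Finset.notMem_empty, iff_false]
    rintro ⟨x, y, -, hne⟩
    exact hne rfl
  · rw [if_neg hC]
    by_cases hc1 : C.card = 1
    · rw [dif_pos hc1]
      obtain hu := (Finset.card_eq_one.mp hc1).choose_spec
      rw [essential_proj]
      exact (mem_of_eq_singleton hu).symm
    · rw [dif_neg hc1]
      constructor
      · intro he
        by_contra hne
        exact not_essential_of_readsOnly (readsOnly_andSet C) hne he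
      · exact essential_andSet

lemma gad_ess_some {n : ℕ} {b : Fin n} {C : Finset (Fin n)} (hb : b ∉ C) {i : Fin n} :
    Essential (gad (some b) C) i ↔ i ∈ insert b C := by
  simp only [gad]
  by_cases hC : C = ∅
  · rw [if_pos hC, hC, essential_proj]
    simp
  · rw [if_neg hC]
    by_cases hc1 : C.card = 1
    · rw [dif_pos hc1]
      obtain hu := (Finset.card_eq_one.mp hc1).choose_spec
      set u := (Finset.card_eq_one.mp hc1).choose with hudef
      have hbu : b ≠ u := fun hbu => hb ((mem_of_eq_singleton hu).mpr hbu)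
      have hmem : i ∈ insert b C ↔ i = b ∨ i = u := by
        rw [Finset.mem_insert, mem_of_eq_singleton hu]
      rw [hmem]
      constructor
      · intro he
        by_contra hne
        push_neg at hne
        refine not_essential_of_readsOnly (S := {b, u}) ?_ ?_ he
        · intro x y hxy
          simp only [hxy b (by simp), hxy u (by simp)]
        · simp [hne.1, hne.2]
      · rintro (rfl | rfl)
        · refine ⟨fun _ => false, Function.update (fun _ => false) i true,
            fun k hk => (Function.update_of_ne hk true fun _ => false).symm, ?_⟩
          have h1 : Function.update (fun _ => false) i true i = true :=
            Function.update_self _ _ _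
          have h2 : Function.update (fun _ => false) i true u = false :=
            Function.update_of_ne (Ne.symm hbu) _ _
          simp [h1, h2]
        · refine ⟨Function.update (fun _ => false) b true,
            Function.update (Function.update (fun _ => false) b true) u true,
            fun k hk => (Function.update_of_ne hk true (Function.update (fun _ => false) b true)).symm, ?_⟩
          have h1 : Function.update (fun _ => false) b true b = true :=
            Function.update_self _ _ _
          have h2 : Function.update (fun _ => false) b true u = false :=
            Function.update_of_ne (Ne.symm hbu) _ _
          have h3 : Function.update (Function.update (fun _ => false) b true) u true b = true := by
            rw [Function.update_of_ne hbu]; exact h1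
          have h4 : Function.update (Function.update (fun _ => false) b true) u true u = true :=
            Function.update_self _ _ _
          simp [h1, h2, h3, h4]
    · rw [dif_neg hc1]
      constructor
      · intro he
        by_contra hne
        simp only [Finset.mem_insert, not_or] at hne
        refine not_essential_of_readsOnly (S := insert b C) ?_ ?_ he
        · intro x y hxy
          simp only [hxy b (Finset.mem_insert_self b C),
            readsOnly_andSet C x y fun j hj => hxy j (Finset.mem_insert_of_mem hj)]
        · simp [hne.1, hne.2]
      · intro hi
        rcases Finset.mem_insert.mp hi with rfl | hi
        · refine ⟨fun _ => false, Function.update (fun _ => false) i true,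
            fun k hk => (Function.update_of_ne hk true fun _ => false).symm, ?_⟩
          have h1 : Function.update (fun _ => false) i true i = true :=
            Function.update_self _ _ _
          have h2 : andSet C (Function.update (fun _ => false) i true) =
              andSet C (fun _ => false) :=
            readsOnly_andSet C _ _ fun j hj =>
              Function.update_of_ne (fun hji => hb (by rw [← hji]; exact hj)) _ _
          obtain ⟨a, ha⟩ := Finset.nonempty_iff_ne_empty.mpr hC
          have h3 : andSet C (fun _ => false) = false := andSet_eq_false ha rfl
          simp [h1, h2, h3]
        · have hib : i ≠ b := fun hib => hb (by rw [← hib]; exact hi)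
          refine ⟨Function.update (fun _ => true) b false,
            Function.update (Function.update (fun _ => true) b false) i false,
            fun k hk => (Function.update_of_ne hk false (Function.update (fun _ => true) b false)).symm, ?_⟩
          have h1 : Function.update (fun _ => true) b false b = false :=
            Function.update_self _ _ _
          have h3 : Function.update (Function.update (fun _ => true) b false) i false b = false := by
            rw [Function.update_of_ne hib.symm]; exact h1
          have h2 : andSet C (Function.update (fun _ => true) b false) = true := by
            rw [andSet_eq_true]
            intro j hj
            rw [Function.update_of_ne (fun hjb => hb (by rw [← hjb]; exact hj))]
          have h4 : andSet C (Function.update (Function.update (fun _ => true) b false) i false)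
              = false :=
            andSet_eq_false hi (Function.update_self _ _ _)
          simp [h1, h2, h3, h4]


open Fin.NatCast in
lemma not_SO_of_not_P2 {n h : ℕ} (f : Fin n → (Fin n → Bool) → Bool)
    (hP2 : ¬ SatisfiesP2 (DepEdge f) {i : Fin n | (i : ℕ) < h}) :
    ¬ StructurallyObservable f h := by
  rw [SatisfiesP2] at hP2
  push_neg at hP2
  obtain ⟨m, c, hcyc, hcO, hnc⟩ := hP2
  obtain ⟨hcinj, hcedge⟩ := hcyc
  rw [CycleSatisfiesP2] at hnc
  push_neg at hnc
  -- the "one-hot" states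
  set δ : Fin (m + 1) → Fin n → Bool := fun k i => if i = c k then true else false with hδ
  have hδspec : ∀ k i, δ k i = true ↔ i = c k := by
    intro k i; rw [hδ]; simp
  -- the counterexample network
  set g : Fin n → (Fin n → Bool) → Bool := fun w =>
    if hD : ∃ j, c j = w then
      gad (some (c (hD.choose - 1))) ((EssSet (f w)).erase (c (hD.choose - 1)))
    else gad none (EssSet (f w)) with hgdef
  -- the distinguished in-neighbor is essential
  have hbmem : ∀ (w : Fin n) (hD : ∃ j, c j = w), c (hD.choose - 1) ∈ EssSet (f w) := by
    intro w hD
    have hspec : c hD.choose = w := hD.choose_spec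
    have hedge := hcedge (hD.choose - 1)
    rw [sub_add_cancel, hspec] at hedge
    exact mem_EssSet.mpr hedge
  -- essential sets of g coincide with those of f
  have hEss : ∀ w i, Essential (g w) i ↔ Essential (f w) i := by
    intro w i
    rw [hgdef]
    by_cases hD : ∃ j, c j = w
    · simp only [dif_pos hD]
      rw [gad_ess_some (Finset.notMem_erase _ _),
        Finset.insert_erase (hbmem w hD), mem_EssSet]
    · simp only [dif_neg hD]
      rw [gad_ess_none, mem_EssSet]
  -- value facts
  have hval0 : netStep g (fun _ => false) = (fun _ => false) := by
    funext w
    show g w (fun _ => false) = false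
    rw [hgdef]
    by_cases hD : ∃ j, c j = w
    · simp only [dif_pos hD]; exact gad_zero _ _
    · simp only [dif_neg hD]; exact gad_zero _ _
  have hvalδ : ∀ k, netStep g (δ k) = δ (k + 1) := by
    intro k
    funext w
    show g w (δ k) = δ (k + 1) w
    rw [hgdef]
    by_cases hD : ∃ j, c j = w
    · simp only [dif_pos hD]
      rw [gad_delta_some (Finset.notMem_erase _ _) (hδspec k)]
      have hspec : c hD.choose = w := hD.choose_spec
      have : δ k (c (hD.choose - 1)) = δ (k + 1) w := by
        by_cases he : hD.choose - 1 = k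
        · have h1 : δ k (c (hD.choose - 1)) = true := (hδspec k _).mpr (by rw [he])
          have h2 : δ (k + 1) w = true := (hδspec (k + 1) w).mpr (by
            rw [← hspec]
            congr 1
            rwa [sub_eq_iff_eq_add] at he)
          rw [h1, h2]
        · have h1 : δ k (c (hD.choose - 1)) = false := by
            rw [← Bool.not_eq_true, hδspec k]
            intro hcc
            exact he (hcinj hcc)
          have h2 : δ (k + 1) w = false := by
            rw [← Bool.not_eq_true, hδspec (k + 1)]
            intro hw
            apply he
            rw [sub_eq_iff_eq_add]
            apply hcinj
            rw [hspec, hw]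
          rw [h1, h2]
      exact this
    · simp only [dif_neg hD]
      push_neg at hD
      have hne : ∀ j, c j ≠ w := hD
      rw [gad_delta_none (hδspec k) ?hu]
      case hu =>
        intro hc1 hua
        obtain hu := (Finset.card_eq_one.mp hc1).choose_spec
        rw [hua] at hu
        refine hnc w (fun j => hne j) k ⟨?_, ?_⟩
        · exact mem_EssSet.mp ((mem_of_eq_singleton hu).mpr rfl)
        · intro u' hu'
          exact (mem_of_eq_singleton hu).mp (mem_EssSet.mpr hu')
      symm
      rw [← Bool.not_eq_true, hδspec (k + 1)]
      intro hw
      exact hne (k + 1) hw.symm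
  -- conclude
  intro hSO
  have hobs := hSO g (fun i j => by rw [DepEdge, DepEdge, hEss])
  have hx0 : ∀ k : ℕ, (netStep g)^[k] (fun _ => false) = (fun _ => false) := by
    intro k
    induction k with
    | zero => rfl
    | succ k ih => rw [Function.iterate_succ_apply, hval0, ih]
  have hy0 : ∀ k : ℕ, (netStep g)^[k] (δ 0) = δ (k : Fin (m + 1)) := by
    intro k
    induction k with
    | zero => simp
    | succ k ih =>
      rw [Function.iterate_succ_apply', ih, hvalδ]
      push_cast
      ring
  have hne0 : (fun _ : Fin n => false) ≠ δ 0 := by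
    intro hcon
    have := congrFun hcon (c 0)
    rw [(hδspec 0 (c 0)).mpr rfl] at this
    simp at this
  obtain ⟨k, q, hq, hneq⟩ := hobs (fun _ => false) (δ 0) hne0
  apply hneq
  rw [hx0, hy0]
  symm
  rw [← Bool.not_eq_true, hδspec]
  intro hqc
  exact hcO (k : Fin (m + 1)) (by rw [← hqc]; exact hq)


lemma partition_of_sigma {n : ℕ} {E : Fin n → Fin n → Prop} {O : Set (Fin n)}
    (σ : Fin n → Fin n) (hσ1 : ∀ v, v ∉ O → UniqueInNbr E v (σ v))
    (hσ2 : ∀ v, ∃ k, σ^[k] v ∈ O) : ObservedPathPartition E O := by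
  set depth : Fin n → ℕ := fun v => Nat.find (hσ2 v) with hdepthdef
  set hit : Fin n → Fin n := fun v => σ^[depth v] v with hhitdef
  have hhit : ∀ v, hit v ∈ O := fun v => Nat.find_spec (hσ2 v)
  have hdepth0 : ∀ v, depth v = 0 ↔ v ∈ O := by
    intro v
    rw [hdepthdef]
    simp only [Nat.find_eq_zero, Function.iterate_zero, id]
  have hhit0 : ∀ v ∈ O, hit v = v := by
    intro v hv
    rw [hhitdef]
    simp only [(hdepth0 v).mpr hv, Function.iterate_zero, id]
  have hdeq : ∀ v, depth v = Nat.find (hσ2 v) := fun _ => rfl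
  have hstep : ∀ v, v ∉ O → depth v = depth (σ v) + 1 ∧ hit (σ v) = hit v := by
    intro v hv
    have hd0 : depth v ≠ 0 := fun hc => hv ((hdepth0 v).mp hc)
    have h1 : σ^[depth v - 1] (σ v) ∈ O := by
      have h0 := hhit v
      rw [hhitdef] at h0
      simp only at h0
      rw [show depth v = depth v - 1 + 1 by omega, Function.iterate_succ_apply] at h0
      exact h0
    have h2 : depth (σ v) ≤ depth v - 1 := by
      have := Nat.find_min' (hσ2 (σ v)) h1
      rw [← hdeq (σ v)] at this
      exact this
    have h3 : ¬ depth (σ v) < depth v - 1 := by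
      intro hlt
      have hmem : σ^[depth (σ v) + 1] v ∈ O := by
        rw [Function.iterate_succ_apply]
        have := hhit (σ v)
        rw [hhitdef] at this
        exact this
      have h5 := Nat.find_min' (hσ2 v) hmem
      rw [← hdeq v] at h5
      omega
    have hd : depth v = depth (σ v) + 1 := by omega
    refine ⟨hd, ?_⟩
    rw [hhitdef]
    simp only
    rw [hd, ← Function.iterate_succ_apply]
  have hinj : ∀ v w, v ∉ O → w ∉ O → σ v = σ w → v = w := by
    intro v w hv hw hσvw
    have h1 := (hσ1 v hv).1
    rw [hσvw] at h1
    exact (hσ1 w hw).2 v h1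
  have huniq : ∀ t v w, depth v = t → depth w = t → hit v = hit w → v = w := by
    intro t
    induction t with
    | zero =>
      intro v w hv hw hvw
      have hvO := (hdepth0 v).mp hv
      have hwO := (hdepth0 w).mp hw
      rw [hhit0 v hvO, hhit0 w hwO] at hvw
      exact hvw
    | succ t ih =>
      intro v w hv hw hvw
      have hvO : v ∉ O := fun hc => by rw [(hdepth0 v).mpr hc] at hv; omega
      have hwO : w ∉ O := fun hc => by rw [(hdepth0 w).mpr hc] at hw; omega
      obtain ⟨hv1, hv2⟩ := hstep v hvO
      obtain ⟨hw1, hw2⟩ := hstep w hwO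
      refine hinj v w hvO hwO (ih (σ v) (σ w) (by omega) (by omega) (by rw [hv2, hw2, hvw]))
  have hdesc : ∀ (t : ℕ) (v : Fin n), t ≤ depth v →
      depth (σ^[t] v) = depth v - t ∧ hit (σ^[t] v) = hit v := by
    intro t
    induction t with
    | zero => intro v _; simp
    | succ t ih =>
      intro v ht
      have hvO : v ∉ O := by
        intro hc
        rw [(hdepth0 v).mpr hc] at ht
        omega
      obtain ⟨h1, h2⟩ := hstep v hvO
      have ht' : t ≤ depth (σ v) := by omega
      obtain ⟨h3, h4⟩ := ih (σ v) ht'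
      rw [Function.iterate_succ_apply]
      exact ⟨by omega, by rw [h4, h2]⟩
  -- index the paths by the marked vertices
  set O' : Finset (Fin n) := Finset.univ.filter (· ∈ O) with hO'def
  set r := O'.card with hrdef
  set o : Fin r → Fin n := fun i => (O'.equivFin.symm i : Fin n) with hodef
  have omem : ∀ i, o i ∈ O := by
    intro i
    have h2 : ∀ x : {x // x ∈ O'}, (x : Fin n) ∈ O := by
      rintro ⟨x, hx⟩
      rw [hO'def, Finset.mem_filter] at hx
      exact hx.2
    exact h2 _
  have oinj : Function.Injective o := by
    intro i j hij
    exact O'.equivFin.symm.injective (Subtype.ext hij)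
  have osurj : ∀ w, w ∈ O → ∃ i, o i = w := by
    intro w hw
    refine ⟨O'.equivFin ⟨w, by rw [hO'def]; simpa using hw⟩, ?_⟩
    rw [hodef]
    simp
  -- the length of each path
  have hfibne : ∀ i : Fin r,
      ((Finset.univ.filter (fun v => hit v = o i)).image depth).Nonempty := by
    intro i
    refine ⟨depth (o i), Finset.mem_image_of_mem _ ?_⟩
    simp [hhit0 (o i) (omem i)]
  set ℓ : Fin r → ℕ := fun i => ((Finset.univ.filter (fun v => hit v = o i)).image depth).max'
    (hfibne i) with hℓdef
  have hbound : ∀ (i : Fin r) (v : Fin n), hit v = o i → depth v ≤ ℓ i := by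
    intro i v hv
    exact Finset.le_max' _ _ (Finset.mem_image_of_mem _ (by simp [hv]))
  have hmax : ∀ i : Fin r, ∃ v, hit v = o i ∧ depth v = ℓ i := by
    intro i
    have := Finset.max'_mem _ (hfibne i)
    rw [Finset.mem_image] at this
    obtain ⟨v, hv, hd⟩ := this
    exact ⟨v, by simpa using hv, hd⟩
  have hex : ∀ (i : Fin r) (k : Fin (ℓ i + 1)), ∃ v, hit v = o i ∧ depth v = ℓ i - (k : ℕ) := by
    intro i k
    obtain ⟨vmax, hv1, hv2⟩ := hmax i
    have hk : (k : ℕ) ≤ depth vmax := by rw [hv2]; omega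
    obtain ⟨h1, h2⟩ := hdesc (k : ℕ) vmax hk
    exact ⟨σ^[(k : ℕ)] vmax, by rw [h2, hv1], by rw [h1, hv2]⟩
  set p : (i : Fin r) → Fin (ℓ i + 1) → Fin n := fun i k => (hex i k).choose with hpdef
  have hp : ∀ (i : Fin r) (k : Fin (ℓ i + 1)),
      hit (p i k) = o i ∧ depth (p i k) = ℓ i - (k : ℕ) := fun i k => (hex i k).choose_spec
  refine ⟨r, ℓ, p, ?_, ?_, ?_⟩
  · -- each is an observed path
    intro i
    refine ⟨?_, ?_, ?_, ?_⟩
    · intro k k' hkk'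
      have h1 := (hp i k).2
      have h2 := (hp i k').2
      rw [hkk'] at h1
      have hk := k.isLt
      have hk' := k'.isLt
      exact Fin.ext (by omega)
    · intro k
      have hd : depth (p i k.castSucc) = ℓ i - (k : ℕ) := by
        have := (hp i k.castSucc).2
        simpa using this
      have hklt : (k : ℕ) < ℓ i := k.isLt
      have hpO : p i k.castSucc ∉ O := by
        intro hc
        rw [(hdepth0 _).mpr hc] at hd
        omega
      have hσp : σ (p i k.castSucc) = p i k.succ := by
        obtain ⟨hs1, hs2⟩ := hstep _ hpO
        refine huniq (ℓ i - ((k : ℕ) + 1)) _ _ ?_ ?_ ?_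
        · omega
        · have := (hp i k.succ).2
          simpa using this
        · rw [hs2, (hp i k.castSucc).1, (hp i k.succ).1]
      rw [← hσp]
      exact hσ1 _ hpO
    · have hd := (hp i (Fin.last (ℓ i))).2
      simp only [Fin.val_last, Nat.sub_self] at hd
      have := (hdepth0 _).mp hd
      exact this
    · intro k hk
      have hd := (hp i k).2
      rw [(hdepth0 _).mpr hk] at hd
      have := k.isLt
      exact Fin.ext (by simp; omega)
  · -- pairwise disjoint
    intro i j hij
    rw [Set.disjoint_left]
    rintro v ⟨k, rfl⟩ ⟨k', hk'⟩
    apply hij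
    apply oinj
    rw [← (hp i k).1, ← (hp j k').1, hk']
  · -- union is everything
    ext v
    simp only [Set.mem_iUnion, Set.mem_range, Set.mem_univ, iff_true]
    obtain ⟨i, hi⟩ := osurj (hit v) (hhit v)
    have hdle : depth v ≤ ℓ i := hbound i v hi.symm
    have hklt : ℓ i - depth v < ℓ i + 1 := by omega
    refine ⟨i, ⟨ℓ i - depth v, hklt⟩, ?_⟩
    refine huniq (depth v) _ _ ?_ rfl ?_
    · have h2 := (hp i ⟨ℓ i - depth v, hklt⟩).2
      have h3 : ((⟨ℓ i - depth v, hklt⟩ : Fin (ℓ i + 1)) : ℕ) = ℓ i - depth v := rfl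
      omega
    · rw [(hp i ⟨ℓ i - depth v, hklt⟩).1, hi]


lemma sigma_of_P1P2 {n : ℕ} {E : Fin n → Fin n → Prop} {O : Set (Fin n)}
    (hP1 : SatisfiesP1 E O) (hP2 : SatisfiesP2 E O) :
    ∃ σ : Fin n → Fin n, (∀ v, v ∉ O → UniqueInNbr E v (σ v)) ∧ ∀ v, ∃ k, σ^[k] v ∈ O := by
  have main : ∀ (N : ℕ) (σ : Fin n → Fin n), (∀ v, v ∉ O → UniqueInNbr E v (σ v)) →
      (Finset.univ.filter fun v => ¬∃ k, σ^[k] v ∈ O).card ≤ N →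
      ∃ σ' : Fin n → Fin n, (∀ v, v ∉ O → UniqueInNbr E v (σ' v)) ∧ ∀ v, ∃ k, σ'^[k] v ∈ O := by
    intro N
    induction N with
    | zero =>
      intro σ hσ hcard
      refine ⟨σ, hσ, fun v => ?_⟩
      by_contra hv
      have : v ∈ Finset.univ.filter fun v => ¬∃ k, σ^[k] v ∈ O := by
        simp only [Finset.mem_filter, Finset.mem_univ, true_and]
        exact hv
      have := Finset.card_pos.mpr ⟨v, this⟩
      omega
    | succ N ih =>
      intro σ hσ hcard
      set U : Finset (Fin n) := Finset.univ.filter (fun v => ¬∃ k, σ^[k] v ∈ O) with hUdef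
      by_cases hUne : U.Nonempty
      case neg =>
        refine ⟨σ, hσ, fun v => ?_⟩
        by_contra hv
        exact hUne ⟨v, by simp only [hUdef, Finset.mem_filter, Finset.mem_univ, true_and]; exact hv⟩
      case pos =>
      obtain ⟨u0, hu0⟩ := hUne
      have hu0' : ¬∃ k, σ^[k] u0 ∈ O := by
        rw [hUdef] at hu0
        simpa using hu0
      have hUmem : ∀ v, v ∈ U ↔ ¬∃ k, σ^[k] v ∈ O := by
        intro v
        rw [hUdef]
        simp
      have hUO : ∀ v, v ∈ U → v ∉ O := by
        intro v hv hvO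
        exact ((hUmem v).mp hv) ⟨0, hvO⟩
      have hUinv : ∀ v, v ∈ U → σ v ∈ U := by
        intro v hv
        rw [hUmem] at hv ⊢
        intro ⟨k, hk⟩
        exact hv ⟨k + 1, by rwa [Function.iterate_succ_apply]⟩
      have hinj : ∀ v w, v ∉ O → w ∉ O → σ v = σ w → v = w := by
        intro v w hv hw hσvw
        have h1 := (hσ v hv).1
        rw [hσvw] at h1
        exact (hσ w hw).2 v h1
      have horb : ∀ k, σ^[k] u0 ∈ U := by
        intro k
        induction k with
        | zero => exact hu0
        | succ k ihk => rw [Function.iterate_succ_apply']; exact hUinv _ ihk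
      have hcancel : ∀ (a : ℕ) (x y : Fin n), (∀ k, σ^[k] x ∈ U) → (∀ k, σ^[k] y ∈ U) →
          σ^[a] x = σ^[a] y → x = y := by
        intro a
        induction a with
        | zero => intro x y _ _ hxy; simpa using hxy
        | succ a iha =>
          intro x y hx hy hxy
          rw [Function.iterate_succ_apply, Function.iterate_succ_apply] at hxy
          have hσxy : σ x = σ y := by
            refine iha (σ x) (σ y) ?_ ?_ hxy
            · intro k; rw [← Function.iterate_succ_apply]; exact hx (k + 1)
            · intro k; rw [← Function.iterate_succ_apply]; exact hy (k + 1)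
          exact hinj x y (hUO x (by simpa using hx 0)) (hUO y (by simpa using hy 0)) hσxy
      have horbU : ∀ (t : ℕ) (k : ℕ), σ^[k] (σ^[t] u0) ∈ U := by
        intro t k
        rw [← Function.iterate_add_apply]
        exact horb _
      have hkey : ∀ a b : ℕ, a < b → σ^[a] u0 = σ^[b] u0 → σ^[b - a] u0 = u0 := by
        intro a b hab heq
        refine hcancel a _ u0 (fun k => horbU (b - a) k) (fun k => horb k) ?_
        rw [← Function.iterate_add_apply, show a + (b - a) = b by omega]
        exact heq.symm
      have hperiod : ∃ p, 1 ≤ p ∧ σ^[p] u0 = u0 := by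
        obtain ⟨a, b, hab, heq⟩ := Finite.exists_ne_map_eq_of_infinite (fun k : ℕ => σ^[k] u0)
        rcases Nat.lt_trichotomy a b with hlt | heqab | hgt
        · exact ⟨b - a, by omega, hkey a b hlt heq⟩
        · exact absurd heqab hab
        · exact ⟨a - b, by omega, hkey b a hgt heq.symm⟩
      set pmin := Nat.find hperiod with hpmindef
      obtain ⟨hp1, hpeq⟩ : 1 ≤ pmin ∧ σ^[pmin] u0 = u0 := Nat.find_spec hperiod
      have hpmin_min : ∀ q, 1 ≤ q → q < pmin → σ^[q] u0 ≠ u0 := by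
        intro q h1 hq hcon
        exact Nat.find_min hperiod hq ⟨h1, hcon⟩
      set m := pmin - 1 with hmdef
      have hm1 : m + 1 = pmin := by omega
      set c : Fin (m + 1) → Fin n := fun j => σ^[(j : ℕ)] u0 with hcdef
      have hcU : ∀ j, c j ∈ U := fun j => horb _
      have hcO : ∀ j, c j ∉ O := fun j => hUO _ (hcU j)
      have hlt_ne : ∀ i j : Fin (m + 1), (i : ℕ) < (j : ℕ) → c i ≠ c j := by
        intro i j hij hcon
        have hk := hkey (i : ℕ) (j : ℕ) hij hcon
        have hj := j.isLt
        exact hpmin_min ((j : ℕ) - (i : ℕ)) (by omega) (by omega) hk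
      have hcinj : Function.Injective c := by
        intro i j hij
        rcases Nat.lt_trichotomy (i : ℕ) (j : ℕ) with hlt | heqij | hgt
        · exact absurd hij (hlt_ne i j hlt)
        · exact Fin.ext heqij
        · exact absurd hij.symm (hlt_ne j i hgt)
      have hcstep : ∀ j : Fin (m + 1), σ (c j) = c (j + 1) := by
        intro j
        by_cases hj : j = Fin.last m
        · rw [hj]
          show σ (σ^[((Fin.last m : Fin (m + 1)) : ℕ)] u0) =
            σ^[((Fin.last m + 1 : Fin (m + 1)) : ℕ)] u0
          have h0 : ((Fin.last m + 1 : Fin (m + 1)) : ℕ) = 0 := by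
            rw [Fin.val_add_one, if_pos rfl]
          rw [h0, Fin.val_last, ← Function.iterate_succ_apply' σ m u0]
          show σ^[m + 1] u0 = u0
          rw [hm1]
          exact hpeq
        · show σ (σ^[(j : ℕ)] u0) = σ^[((j + 1 : Fin (m + 1)) : ℕ)] u0
          rw [Fin.val_add_one, if_neg hj, ← Function.iterate_succ_apply' σ (j : ℕ) u0]
      have hedges : ∀ j, E (c j) (c (j + 1)) := by
        intro j
        rw [← hcstep j]
        exact (hσ (c j) (hcO j)).1
      obtain ⟨vstar, hvoff, jstar, hvu⟩ := hP2 m c ⟨hcinj, hedges⟩ hcO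
      have hvR : ∃ k, σ^[k] vstar ∈ O := by
        by_contra hvU'
        have hvU : vstar ∈ U := (hUmem vstar).mpr hvU'
        have himg : U.image σ = U := by
          apply Finset.eq_of_subset_of_card_le
          · intro w hw
            obtain ⟨v, hv, rfl⟩ := Finset.mem_image.mp hw
            exact hUinv v hv
          · rw [Finset.card_image_of_injOn]
            intro v hv w hw
            exact hinj v w (hUO v hv) (hUO w hw)
        obtain ⟨u1, hu1U, hu1⟩ := Finset.mem_image.mp (himg ▸ hvU)
        have hE1 : E u1 vstar := by
          have := (hσ u1 (hUO u1 hu1U)).1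
          rwa [hu1] at this
        have hu1c : u1 = c jstar := hvu.2 u1 hE1
        have hvs : vstar = c (jstar + 1) := by
          rw [← hu1, hu1c, hcstep]
        exact hvoff (jstar + 1) hvs.symm
      obtain ⟨kst, hkst⟩ := hvR
      set σ' := Function.update σ (c jstar) vstar with hσ'def
      have hσ'valid : ∀ v, v ∉ O → UniqueInNbr E v (σ' v) := by
        intro v hv
        rw [hσ'def]
        by_cases hvc : v = c jstar
        · rw [hvc, Function.update_self]
          exact hvu
        · rw [Function.update_of_ne hvc]
          exact hσ v hv
      have hcjU : c jstar ∈ U := hcU jstar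
      have hcjnR : ¬∃ k, σ^[k] (c jstar) ∈ O := (hUmem _).mp hcjU
      have htransfer : ∀ (k : ℕ) (u : Fin n), σ^[k] u ∈ O → ∃ k', σ'^[k'] u ∈ O := by
        intro k
        induction k with
        | zero => intro u hu; exact ⟨0, hu⟩
        | succ k ihk =>
          intro u hu
          by_cases huO : u ∈ O
          · exact ⟨0, huO⟩
          · have hune : u ≠ c jstar := by
              intro hcon
              exact hcjnR ⟨k + 1, by rw [← hcon]; exact hu⟩
            rw [Function.iterate_succ_apply] at hu
            obtain ⟨k', hk'⟩ := ihk (σ u) hu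
            refine ⟨k' + 1, ?_⟩
            rw [Function.iterate_succ_apply, hσ'def, Function.update_of_ne hune]
            exact hk'
      have hcjR' : ∃ k, σ'^[k] (c jstar) ∈ O := by
        obtain ⟨k', hk'⟩ := htransfer kst vstar hkst
        refine ⟨k' + 1, ?_⟩
        rw [Function.iterate_succ_apply]
        have hupd : σ' (c jstar) = vstar := by rw [hσ'def, Function.update_self]
        rw [hupd]
        exact hk'
      have hsub : (Finset.univ.filter fun v => ¬∃ k, σ'^[k] v ∈ O) ⊆ U.erase (c jstar) := by
        intro v hv
        simp only [Finset.mem_filter, Finset.mem_univ, true_and] at hv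
        rw [Finset.mem_erase]
        constructor
        · intro hcon
          exact hv (hcon ▸ hcjR')
        · rw [hUmem]
          intro ⟨k, hk⟩
          obtain ⟨k', hk'⟩ := htransfer k v hk
          exact hv ⟨k', hk'⟩
      refine ih σ' hσ'valid ?_
      have h1 := Finset.card_le_card hsub
      have h2 := Finset.card_erase_of_mem hcjU
      have h3 := Finset.card_pos.mpr ⟨c jstar, hcjU⟩
      omega
  obtain ⟨σ0, hσ0⟩ : ∃ σ0 : Fin n → Fin n, ∀ v, v ∉ O → UniqueInNbr E v (σ0 v) := by
    refine ⟨fun v => if hv : v ∈ O then v else (hP1 v hv).choose, fun v hv => ?_⟩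
    simp only [dif_neg hv]
    exact (hP1 v hv).choose_spec
  exact main _ σ0 hσ0 le_rfl

end Aux

/-- A Boolean network on `n` nodes with `h` outputs is structurally observable
iff the vertex set of its dependency graph can be partitioned into
vertex-disjoint observed paths. -/
theorem bn_structurally_observable_iff_observed_path_partition {n h : ℕ}
    (hh1 : 1 ≤ h) (hhn : h ≤ n) (f : Fin n → (Fin n → Bool) → Bool) :
    StructurallyObservable f h ↔
      ObservedPathPartition (DepEdge f) {i : Fin n | (i : ℕ) < h} := by
  constructor
  · intro hSO
    by_cases hP1 : SatisfiesP1 (DepEdge f) {i : Fin n | (i : ℕ) < h}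
    · by_cases hP2 : SatisfiesP2 (DepEdge f) {i : Fin n | (i : ℕ) < h}
      · obtain ⟨σ, h1, h2⟩ := sigma_of_P1P2 hP1 hP2
        exact partition_of_sigma σ h1 h2
      · exact absurd hSO (not_SO_of_not_P2 f hP2)
    · exact absurd hSO (not_SO_of_not_P1 f hP1)
  · exact SO_of_partition f
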